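/- arXiv:1011.1938 — 2 statements merged into one kernel-verified Lean document; each statement's English description precedes it below -/
import Mathlib

section
/- Let λ, p ∈ (0,1), ν = ν_λ^p the biased Bernoulli convolution, and δ > 0 with c_δ = inf_{x∈I_λ} ν(B(x,δ)) > 0. Suppose x ∈ I_λ has a unique expansion i in base λ and dist(F_β^n x, C_λ) ≥ δ for all n ≥ 0 (β = 1/λ). Then for all n ≥ 1: c_δ · p^{ℓ₀(i,n)} (1−p)^{ℓ₁(i,n)} ≤ ν(B(x, δλ^n)) ≤ p^{ℓ₀(i,n)} (1−p)^{ℓ₁(i,n)}, where ℓ_j(i,n) counts occurrences of digit j among i₁,…,i_n. -/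
open MeasureTheory

noncomputable section

def binSeq (i : ℕ → ℕ) : Prop := ∀ n, i n ≤ 1

def piL (l : ℝ) (i : ℕ → ℕ) : ℝ := ∑' n : ℕ, (i n : ℝ) * l ^ (n + 1)

def shiftN (i : ℕ → ℕ) (n : ℕ) : ℕ → ℕ := fun m => i (m + n)

/-- Number of occurrences of the digit `j` among the first `n` digits of `i`. -/
def countDigit (j : ℕ) (i : ℕ → ℕ) (n : ℕ) : ℕ :=
  ((Finset.range n).filter fun m => i m = j).card


lemma binSeq_summable {l : ℝ} (hl0 : 0 < l) (hl1 : l < 1) {j : ℕ → ℕ} (hj : binSeq j) :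
    Summable (fun n => (j n : ℝ) * l ^ (n + 1)) := by
  apply Summable.of_nonneg_of_le (fun n => by positivity) (fun n => ?_)
    ((summable_geometric_of_lt_one hl0.le hl1).mul_left l)
  have h1 : (j n : ℝ) ≤ 1 := by exact_mod_cast hj n
  have h2 : (0:ℝ) ≤ l ^ (n+1) := by positivity
  calc (j n : ℝ) * l ^ (n+1) ≤ 1 * l ^ (n+1) := by nlinarith
    _ = l * l ^ n := by ring

lemma piL_nonneg {l : ℝ} (hl0 : 0 < l) (j : ℕ → ℕ) : 0 ≤ piL l j :=
  tsum_nonneg (fun n => by positivity)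

lemma piL_le {l : ℝ} (hl0 : 0 < l) (hl1 : l < 1) {j : ℕ → ℕ} (hj : binSeq j) :
    piL l j ≤ l / (1 - l) := by
  have hone : (0:ℝ) < 1 - l := by linarith
  have hgeo : ∑' n : ℕ, l * l ^ n = l / (1 - l) := by
    rw [tsum_mul_left, tsum_geometric_of_lt_one hl0.le hl1]
    rw [div_eq_mul_inv]
  calc piL l j ≤ ∑' n : ℕ, l * l ^ n := by
        apply Summable.tsum_le_tsum _ (binSeq_summable hl0 hl1 hj)
          ((summable_geometric_of_lt_one hl0.le hl1).mul_left l)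
        intro n
        have h1 : (j n : ℝ) ≤ 1 := by exact_mod_cast hj n
        have h2 : (0:ℝ) ≤ l ^ (n+1) := by positivity
        calc (j n : ℝ) * l ^ (n+1) ≤ 1 * l ^ (n+1) := by nlinarith
          _ = l * l ^ n := by ring
    _ = l / (1 - l) := hgeo

lemma piL_rec {l : ℝ} (hl0 : 0 < l) (hl1 : l < 1) {j : ℕ → ℕ} (hj : binSeq j) :
    piL l j = l * ((j 0 : ℝ) + piL l (shiftN j 1)) := by
  have hs : Summable (fun n => (j n : ℝ) * l ^ (n + 1)) := binSeq_summable hl0 hl1 hj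
  unfold piL
  rw [Summable.tsum_eq_zero_add hs]
  have : ∑' n : ℕ, (j (n+1) : ℝ) * l ^ (n + 1 + 1) = l * ∑' n : ℕ, (shiftN j 1 n : ℝ) * l ^ (n+1) := by
    rw [← tsum_mul_left]
    congr 1
    funext n
    simp [shiftN]
    ring
  rw [this]
  ring

lemma shiftN_binSeq {i : ℕ → ℕ} (hi : binSeq i) (n : ℕ) : binSeq (shiftN i n) :=
  fun m => hi (m + n)

lemma shiftN_shiftN (i : ℕ → ℕ) (n : ℕ) : shiftN (shiftN i n) 1 = shiftN i (n + 1) := by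
  funext m; simp [shiftN]; ring_nf

theorem stmt7 (l p δ : ℝ) (hl0 : 0 < l) (hl1 : l < 1) (hp0 : 0 < p) (hp1 : p < 1)
    (hδ : 0 < δ)
    (ν : Measure ℝ) [IsProbabilityMeasure ν]
    (hss : ν = ENNReal.ofReal p • ν.map (fun x => l * (x + 0)) +
      ENNReal.ofReal (1 - p) • ν.map (fun x => l * (x + 1)))
    (hsupp : ν (Set.Icc 0 (l / (1 - l)))ᶜ = 0)
    (x : ℝ) (hx : x ∈ Set.Icc 0 (l / (1 - l)))
    (i : ℕ → ℕ) (hib : binSeq i) (hix : piL l i = x)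
    (huniq : ∀ j : ℕ → ℕ, binSeq j → piL l j = x → j = i)
    -- `F_β`-orbit stays at distance ≥ δ from the gap `C_λ = [λ, λ²/(1-λ)]`:
    (horb : ∀ n : ℕ, (i n = 0 → piL l (shiftN i n) ≤ l - δ) ∧
      (i n = 1 → piL l (shiftN i n) ≥ l ^ 2 / (1 - l) + δ)) :
    ∀ n : ℕ, 1 ≤ n →
      (⨅ y ∈ Set.Icc 0 (l / (1 - l)), ν (Metric.ball y δ)) *
          ENNReal.ofReal (p ^ countDigit 0 i n * (1 - p) ^ countDigit 1 i n) ≤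
        ν (Metric.ball x (δ * l ^ n)) ∧
      ν (Metric.ball x (δ * l ^ n)) ≤
        ENNReal.ofReal (p ^ countDigit 0 i n * (1 - p) ^ countDigit 1 i n) := by
  have hlne : l ≠ 0 := hl0.ne'
  have hone : (0:ℝ) < 1 - l := by linarith
  -- preimage of a ball under the similarity
  have hpre : ∀ (c r j : ℝ), (fun z : ℝ => l * (z + j)) ⁻¹' Metric.ball c r
      = Metric.ball (c / l - j) (r / l) := by
    intro c r j
    ext z
    simp only [Set.mem_preimage, Metric.mem_ball, Real.dist_eq]
    have h1 : l * (z + j) - c = l * (z - (c / l - j)) := by field_simp; ring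
    rw [h1, abs_mul, abs_of_pos hl0, lt_div_iff₀' hl0]
  have hmeas : ∀ j : ℝ, Measurable fun z : ℝ => l * (z + j) :=
    fun j => (measurable_id.add_const j).const_mul l
  have hball : ∀ (c r : ℝ), ν (Metric.ball c r) =
      ENNReal.ofReal p * ν (Metric.ball (c / l - 0) (r / l)) +
      ENNReal.ofReal (1 - p) * ν (Metric.ball (c / l - 1) (r / l)) := by
    intro c r
    conv_lhs => rw [hss]
    rw [Measure.add_apply, Measure.smul_apply, Measure.smul_apply,
      Measure.map_apply (hmeas 0) measurableSet_ball,
      Measure.map_apply (hmeas 1) measurableSet_ball, hpre, hpre]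
    simp [smul_eq_mul]
  have hnull : ∀ (c r : ℝ), (c + r ≤ 0 ∨ l / (1 - l) ≤ c - r) → ν (Metric.ball c r) = 0 := by
    intro c r h
    apply measure_mono_null _ hsupp
    intro z hz
    simp only [Metric.mem_ball, Real.dist_eq] at hz
    obtain ⟨h1, h2⟩ := abs_lt.mp hz
    simp only [Set.mem_compl_iff, Set.mem_Icc, not_and_or, not_le]
    rcases h with h | h
    · left; linarith
    · right; linarith
  -- single step
  have hstep : ∀ (m : ℕ) (r : ℝ), 0 < r → r ≤ δ * l →
      ν (Metric.ball (piL l (shiftN i m)) r) =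
        (if i m = 0 then ENNReal.ofReal p else ENNReal.ofReal (1 - p)) *
          ν (Metric.ball (piL l (shiftN i (m + 1))) (r / l)) := by
    intro m r hr hrδ
    set y := piL l (shiftN i m) with hy
    set y' := piL l (shiftN i (m + 1)) with hy'
    have hrec : y = l * ((i m : ℝ) + y') := by
      rw [hy, piL_rec hl0 hl1 (shiftN_binSeq hib m)]
      rw [shiftN_shiftN]
      simp [shiftN, hy']
    have hy'0 : 0 ≤ y' := piL_nonneg hl0 _
    have hy'1 : y' ≤ l / (1 - l) := piL_le hl0 hl1 (shiftN_binSeq hib (m + 1))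
    rcases Nat.le_one_iff_eq_zero_or_eq_one.mp (hib m) with h | h
    · -- digit 0
      have horb0 : y ≤ l - δ := (horb m).1 h
      have hrec0 : y = l * y' := by rw [hrec, h]; push_cast; ring
      have hc1 : y / l - 0 = y' := by rw [hrec0]; field_simp; simp
      have hc2 : (y / l - 1) + r / l ≤ 0 := by
        have h1 : y / l - 1 + r / l = (y + r - l) / l := by field_simp; ring
        rw [h1]
        apply div_nonpos_of_nonpos_of_nonneg _ hl0.le
        nlinarith
      rw [hball y r, hnull _ _ (Or.inl hc2), mul_zero, add_zero, hc1, if_pos h]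
    · -- digit 1
      have horb1 : y ≥ l ^ 2 / (1 - l) + δ := (horb m).2 h
      have hrec1 : y = l * (1 + y') := by rw [hrec, h]; push_cast; ring
      have hc1 : y / l - 1 = y' := by rw [hrec1]; field_simp; ring
      have hc2 : l / (1 - l) ≤ (y / l - 0) - r / l := by
        have h1 : (y / l - 0) - r / l = (y - r) / l := by field_simp; ring
        rw [h1, div_le_div_iff₀ hone hl0]
        have h2 : l ^ 2 / (1 - l) * (1 - l) = l ^ 2 := by field_simp
        nlinarith [mul_le_mul_of_nonneg_right horb1 hone.le,
          mul_le_mul_of_nonneg_right hrδ hone.le, mul_pos hδ hone, sq_nonneg (1 - l)]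
      rw [hball y r, hnull _ _ (Or.inr hc2), mul_zero, zero_add, hc1, if_neg (by omega)]
  -- count splitting
  have hc : ∀ (j n : ℕ), countDigit j i (n + 1) =
      if i n = j then countDigit j i n + 1 else countDigit j i n := by
    intro j n
    unfold countDigit
    rw [Finset.range_add_one, Finset.filter_insert]
    split
    · rw [Finset.card_insert_of_notMem (by simp)]
    · rfl
  -- chain
  have hchain : ∀ (n : ℕ) (r : ℝ), 0 < r → r ≤ δ →
      ν (Metric.ball x (r * l ^ n)) =
        ENNReal.ofReal (p ^ countDigit 0 i n * (1 - p) ^ countDigit 1 i n) *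
          ν (Metric.ball (piL l (shiftN i n)) r) := by
    intro n
    induction n with
    | zero =>
      intro r hr hrδ
      have h0 : shiftN i 0 = i := by funext m; simp [shiftN]
      simp [countDigit, h0, hix]
    | succ n ih =>
      intro r hr hrδ
      have h1 : r * l ^ (n + 1) = (r * l) * l ^ n := by ring
      have hrl : 0 < r * l := mul_pos hr hl0
      rw [h1, ih (r * l) hrl (by nlinarith), hstep n (r * l) hrl (by nlinarith)]
      have h2 : r * l / l = r := by field_simp
      rw [h2, ← mul_assoc]
      congr 1
      have hA : 0 ≤ p ^ countDigit 0 i n * (1 - p) ^ countDigit 1 i n := mul_nonneg (pow_nonneg hp0.le _) (pow_nonneg (by linarith) _)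
      rcases Nat.le_one_iff_eq_zero_or_eq_one.mp (hib n) with h | h
      · rw [if_pos h, hc 0 n, hc 1 n, if_pos h, if_neg (by omega),
          ← ENNReal.ofReal_mul hA]
        congr 1; ring
      · rw [if_neg (by omega), hc 0 n, hc 1 n, if_neg (by omega), if_pos h,
          ← ENNReal.ofReal_mul hA]
        congr 1; ring
  intro n hn
  have hch := hchain n δ hδ le_rfl
  have hy : piL l (shiftN i n) ∈ Set.Icc 0 (l / (1 - l)) :=
    ⟨piL_nonneg hl0 _, piL_le hl0 hl1 (shiftN_binSeq hib n)⟩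
  constructor
  · rw [hch]
    calc (⨅ y ∈ Set.Icc 0 (l / (1 - l)), ν (Metric.ball y δ)) *
          ENNReal.ofReal (p ^ countDigit 0 i n * (1 - p) ^ countDigit 1 i n)
        ≤ ν (Metric.ball (piL l (shiftN i n)) δ) *
          ENNReal.ofReal (p ^ countDigit 0 i n * (1 - p) ^ countDigit 1 i n) :=
          mul_le_mul_left (biInf_le _ hy) _
      _ = ENNReal.ofReal (p ^ countDigit 0 i n * (1 - p) ^ countDigit 1 i n) *
          ν (Metric.ball (piL l (shiftN i n)) δ) := mul_comm _ _
  · rw [hch]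
    calc ENNReal.ofReal (p ^ countDigit 0 i n * (1 - p) ^ countDigit 1 i n) *
          ν (Metric.ball (piL l (shiftN i n)) δ)
        ≤ ENNReal.ofReal (p ^ countDigit 0 i n * (1 - p) ^ countDigit 1 i n) * 1 :=
          mul_le_mul_right prob_le_one _
      _ = _ := mul_one _
end
end

section
/- Let λ ∈ (1/2,1), k ∈ ℕ with 2λ − 1 < λ^{k−1}(1−λ), and suppose that for all x ∈ I_λ and all n, #{w ∈ {0,1}^{kn} : S_w(I_λ) ∩ B(x, λ^{(n−1)k}η) ≠ ∅} ≤ 2^n for some fixed η > 0. Then for every x ∈ I_λ, the unbiased Bernoulli convolution ν_λ satisfies d̲(ν_λ, x) ≥ (k−1)log 2/(k|log λ|). In particular, there exist C, δ > 0 (depending on λ) with ν_λ(J) ≤ C|J|^δ for every interval J ⊆ I_λ. -/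
open MeasureTheory

noncomputable section

def Smap (l : ℝ) (b : Bool) : ℝ → ℝ := fun x => l * (x + if b then 1 else 0)

def Sword (l : ℝ) (w : List Bool) : ℝ → ℝ := w.foldr (fun b f => Smap l b ∘ f) id

open MeasureTheory
noncomputable section





lemma sword_nil (l : ℝ) : Sword l [] = id := rfl

lemma sword_cons (l : ℝ) (b : Bool) (w : List Bool) :
    Sword l (b :: w) = Smap l b ∘ Sword l w := rfl

lemma smap_measurable (l : ℝ) (b : Bool) : Measurable (Smap l b) := by
  unfold Smap; fun_prop

lemma sword_measurable (l : ℝ) (w : List Bool) : Measurable (Sword l w) := by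
  induction w with
  | nil => exact measurable_id
  | cons b w ih => exact (smap_measurable l b).comp ih

lemma sword_sub (l : ℝ) (w : List Bool) (x y : ℝ) :
    Sword l w x - Sword l w y = l ^ w.length * (x - y) := by
  induction w with
  | nil => simp [sword_nil]
  | cons b w ih =>
    simp only [sword_cons, Function.comp_apply, Smap, List.length_cons, pow_succ]
    linear_combination l * ih

lemma sword_eq (l : ℝ) (w : List Bool) :
    Sword l w = fun x => l ^ w.length * x + Sword l w 0 := by
  funext x
  have := sword_sub l w x 0
  simp at this
  linarith

lemma sword_image_Icc (l : ℝ) (hl : 0 < l) (w : List Bool) (a b : ℝ) :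
    Sword l w '' Set.Icc a b = Set.Icc (Sword l w a) (Sword l w b) := by
  conv_lhs => rw [sword_eq]
  rw [Set.image_affine_Icc' (pow_pos hl w.length)]
  congr 1 <;> (conv_rhs => rw [sword_eq])

lemma ofReal_half : ENNReal.ofReal (1/2) = (2⁻¹ : ENNReal) := by
  rw [show (1/2:ℝ)=2⁻¹ by norm_num]
  simp [ENNReal.ofReal_inv_of_pos]

lemma sword_ofFn_cons (l : ℝ) {m : ℕ} (b : Bool) (w : Fin m → Bool) :
    Sword l (List.ofFn (Fin.cons b w)) = Smap l b ∘ Sword l (List.ofFn w) := by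
  rw [List.ofFn_succ]
  simp only [Fin.cons_zero, Fin.cons_succ]
  rfl

lemma nu_iterate (l : ℝ) (ν : Measure ℝ)
    (hss : ν = ENNReal.ofReal (1 / 2) • ν.map (Smap l false) +
      ENNReal.ofReal (1 / 2) • ν.map (Smap l true))
    (m : ℕ) (B : Set ℝ) (hB : MeasurableSet B) :
    ν B = ∑ w : Fin m → Bool, (2⁻¹ : ENNReal) ^ m * ν (Sword l (List.ofFn w) ⁻¹' B) := by
  induction m generalizing B with
  | zero =>
    rw [Fintype.sum_eq_single (fun (i : Fin 0) => false) (fun w h => absurd (funext fun i => i.elim0) h)]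
    simp [Sword]
  | succ m ih =>
    have hstep : ν B = 2⁻¹ * ν (Smap l false ⁻¹' B) + 2⁻¹ * ν (Smap l true ⁻¹' B) := by
      conv_lhs => rw [hss]
      simp only [ofReal_half, Measure.add_apply, Measure.smul_apply, smul_eq_mul,
        Measure.map_apply (smap_measurable l _) hB]
    rw [hstep, ih _ ((smap_measurable l false) hB), ih _ ((smap_measurable l true) hB)]
    rw [show ∑ w : Fin (m+1) → Bool, (2⁻¹ : ENNReal) ^ (m+1) * ν (Sword l (List.ofFn w) ⁻¹' B)
        = ∑ p : Bool × (Fin m → Bool), (2⁻¹ : ENNReal) ^ (m+1) * ν (Sword l (List.ofFn (Fin.cons p.1 p.2)) ⁻¹' B) by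
      apply Fintype.sum_equiv (Fin.consEquiv fun _ => Bool).symm
      intro w
      have : Fin.cons (((Fin.consEquiv fun _ => Bool).symm) w).1 (((Fin.consEquiv fun _ => Bool).symm) w).2 = w :=
        Fin.cons_self_tail w
      rw [this]]
    rw [Fintype.sum_prod_type, Fintype.sum_bool]
    simp only [sword_ofFn_cons, Set.preimage_comp, pow_succ]
    rw [Finset.mul_sum, Finset.mul_sum]
    ring

lemma basic_step (l : ℝ) (hl0 : 1/2 < l) (hl1 : l < 1) :
    Set.Icc (0:ℝ) (l/(1-l)) ⊆
      (Smap l false '' Set.Icc 0 (l/(1-l))) ∪ (Smap l true '' Set.Icc 0 (l/(1-l))) := by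
  have h1 : (0:ℝ) < 1 - l := by linarith
  have hlpos : (0:ℝ) < l := by linarith
  set L := l/(1-l) with hL
  have hL1 : 1 ≤ L := by rw [hL, le_div_iff₀ h1]; linarith
  intro x hx
  obtain ⟨hx0, hxL⟩ := hx
  rcases le_or_gt x (l*L) with h | h
  · left
    exact ⟨x/l, ⟨by positivity, by rw [div_le_iff₀ hlpos]; linarith⟩, by
      simp [Smap]; field_simp⟩
  · right
    have hxl : l ≤ x := by nlinarith
    have hLl : l * (L + 1) = L := by rw [hL]; field_simp; ring
    refine ⟨x/l - 1, ⟨?_, ?_⟩, ?_⟩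
    · rw [sub_nonneg, le_div_iff₀ hlpos]; linarith
    · rw [sub_le_iff_le_add, div_le_iff₀ hlpos]; nlinarith
    · simp [Smap]; field_simp
lemma cover (l : ℝ) (hl0 : 1/2 < l) (hl1 : l < 1) (m : ℕ) :
    Set.Icc (0:ℝ) (l/(1-l)) ⊆
      ⋃ w : Fin m → Bool, Sword l (List.ofFn w) '' Set.Icc 0 (l/(1-l)) := by
  induction m with
  | zero =>
    intro x hx
    exact Set.mem_iUnion.2 ⟨fun i => i.elim0, by simpa [Sword] using hx⟩
  | succ m ih =>
    intro x hx
    rcases basic_step l hl0 hl1 hx with ⟨y, hy, hxy⟩ | ⟨y, hy, hxy⟩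
    · rcases Set.mem_iUnion.1 (ih hy) with ⟨w, z, hz, hzy⟩
      exact Set.mem_iUnion.2 ⟨Fin.cons false w, z, hz, by
        rw [sword_ofFn_cons]; simp [hzy, hxy]⟩
    · rcases Set.mem_iUnion.1 (ih hy) with ⟨w, z, hz, hzy⟩
      exact Set.mem_iUnion.2 ⟨Fin.cons true w, z, hz, by
        rw [sword_ofFn_cons]; simp [hzy, hxy]⟩

lemma nu_I (l : ℝ) (ν : Measure ℝ) [IsProbabilityMeasure ν]
    (hsupp : ν (Set.Icc 0 (l / (1 - l)))ᶜ = 0) : ν (Set.Icc 0 (l/(1-l))) = 1 := by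
  have h := measure_add_measure_compl (μ := ν)
    (measurableSet_Icc : MeasurableSet (Set.Icc (0:ℝ) (l/(1-l))))
  rw [hsupp, add_zero, measure_univ] at h
  exact h

lemma nu_cyl (l : ℝ) (ν : Measure ℝ) [IsProbabilityMeasure ν] (hl : 0 < l)
    (hss : ν = ENNReal.ofReal (1 / 2) • ν.map (Smap l false) +
      ENNReal.ofReal (1 / 2) • ν.map (Smap l true))
    (hsupp : ν (Set.Icc 0 (l / (1 - l)))ᶜ = 0) (m : ℕ) (w : Fin m → Bool) :
    (2⁻¹:ENNReal)^m ≤ ν (Sword l (List.ofFn w) '' Set.Icc 0 (l/(1-l))) := by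
  have hmeas : MeasurableSet (Sword l (List.ofFn w) '' Set.Icc 0 (l/(1-l))) := by
    rw [sword_image_Icc l hl]; exact measurableSet_Icc
  rw [nu_iterate l ν hss m _ hmeas]
  calc (2⁻¹:ENNReal)^m = 2⁻¹^m * ν (Set.Icc 0 (l/(1-l))) := by
        rw [nu_I l ν hsupp, mul_one]
    _ ≤ 2⁻¹^m * ν (Sword l (List.ofFn w) ⁻¹' (Sword l (List.ofFn w) '' Set.Icc 0 (l/(1-l)))) :=
        mul_le_mul_right (measure_mono (Set.subset_preimage_image _ _)) _
    _ ≤ _ := Finset.single_le_sum (f := fun w' : Fin m → Bool =>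
          (2⁻¹:ENNReal)^m * ν (Sword l (List.ofFn w') ⁻¹' (Sword l (List.ofFn w) '' Set.Icc 0 (l/(1-l)))))
          (fun _ _ => zero_le) (Finset.mem_univ w)

lemma nu_ball_pos (l : ℝ) (ν : Measure ℝ) [IsProbabilityMeasure ν]
    (hl0 : 1/2 < l) (hl1 : l < 1)
    (hss : ν = ENNReal.ofReal (1 / 2) • ν.map (Smap l false) +
      ENNReal.ofReal (1 / 2) • ν.map (Smap l true))
    (hsupp : ν (Set.Icc 0 (l / (1 - l)))ᶜ = 0)
    (x r : ℝ) (hx : x ∈ Set.Icc 0 (l/(1-l))) (hr : 0 < r) : 0 < ν (Metric.ball x r) := by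
  have hlpos : (0:ℝ) < l := by linarith
  have h1 : (0:ℝ) < 1 - l := by linarith
  have hLpos : (0:ℝ) < l/(1-l) := div_pos hlpos h1
  obtain ⟨m, hm⟩ := exists_pow_lt_of_lt_one (div_pos hr hLpos) hl1
  have hm' : l ^ m * (l/(1-l)) < r := by
    rw [← lt_div_iff₀ hLpos]; exact hm
  obtain ⟨w, y, hy, hyx⟩ := Set.mem_iUnion.1 (cover l hl0 hl1 m hx)
  have hsub : Sword l (List.ofFn w) '' Set.Icc 0 (l/(1-l)) ⊆ Metric.ball x r := by
    rintro _ ⟨u, hu, rfl⟩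
    rw [Metric.mem_ball, Real.dist_eq, ← hyx, sword_sub, List.length_ofFn]
    rw [abs_mul, abs_of_pos (pow_pos hlpos m)]
    obtain ⟨hu1, hu2⟩ := hu
    obtain ⟨hy1, hy2⟩ := hy
    have : |u - y| ≤ l/(1-l) := by
      rw [abs_sub_le_iff]
      constructor <;> linarith
    calc l ^ m * |u - y| ≤ l ^ m * (l/(1-l)) :=
          mul_le_mul_of_nonneg_left this (le_of_lt (pow_pos hlpos m))
      _ < r := hm'
  calc (0:ENNReal) < 2⁻¹^m := by
        apply ENNReal.pow_pos
        simp
    _ ≤ ν (Sword l (List.ofFn w) '' Set.Icc 0 (l/(1-l))) := nu_cyl l ν hlpos hss hsupp m w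
    _ ≤ ν (Metric.ball x r) := measure_mono hsub

lemma nu_ball_est (l : ℝ) (ν : Measure ℝ) [IsProbabilityMeasure ν]
    (hss : ν = ENNReal.ofReal (1 / 2) • ν.map (Smap l false) +
      ENNReal.ofReal (1 / 2) • ν.map (Smap l true))
    (hsupp : ν (Set.Icc 0 (l / (1 - l)))ᶜ = 0)
    (m : ℕ) (B : Set ℝ) (hB : MeasurableSet B)
    (N : ℕ)
    (hcn : {w : Fin m → Bool |
      ((Sword l (List.ofFn w) '' Set.Icc 0 (l/(1-l))) ∩ B).Nonempty}.ncard ≤ N) :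
    ν B ≤ (N : ENNReal) * (2⁻¹:ENNReal)^m := by
  classical
  rw [nu_iterate l ν hss m B hB]
  set S := {w : Fin m → Bool |
      ((Sword l (List.ofFn w) '' Set.Icc 0 (l/(1-l))) ∩ B).Nonempty} with hS
  have hterm : ∀ w : Fin m → Bool, (2⁻¹:ENNReal)^m * ν (Sword l (List.ofFn w) ⁻¹' B)
      ≤ if w ∈ S then (2⁻¹:ENNReal)^m else 0 := by
    intro w
    by_cases hw : w ∈ S
    · rw [if_pos hw]
      calc (2⁻¹:ENNReal)^m * ν (Sword l (List.ofFn w) ⁻¹' B)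
          ≤ (2⁻¹:ENNReal)^m * 1 := mul_le_mul_right prob_le_one _
        _ = (2⁻¹:ENNReal)^m := mul_one _
    · rw [if_neg hw]
      have hempty : Sword l (List.ofFn w) ⁻¹' B ∩ Set.Icc 0 (l/(1-l)) = ∅ := by
        by_contra hne
        rcases Set.nonempty_iff_ne_empty.2 hne with ⟨z, hz1, hz2⟩
        exact hw ⟨Sword l (List.ofFn w) z, ⟨z, hz2, rfl⟩, hz1⟩
      have h0 : ν (Sword l (List.ofFn w) ⁻¹' B) = 0 := by
        have hsub : Sword l (List.ofFn w) ⁻¹' B ⊆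
            (Sword l (List.ofFn w) ⁻¹' B ∩ Set.Icc 0 (l/(1-l))) ∪ (Set.Icc 0 (l/(1-l)))ᶜ := by
          intro z hz
          by_cases hzI : z ∈ Set.Icc (0:ℝ) (l/(1-l))
          · exact Or.inl ⟨hz, hzI⟩
          · exact Or.inr hzI
        refine le_antisymm ?_ zero_le
        calc ν (Sword l (List.ofFn w) ⁻¹' B)
            ≤ ν ((Sword l (List.ofFn w) ⁻¹' B ∩ Set.Icc 0 (l/(1-l))) ∪ (Set.Icc 0 (l/(1-l)))ᶜ) :=
              measure_mono hsub
          _ ≤ ν (Sword l (List.ofFn w) ⁻¹' B ∩ Set.Icc 0 (l/(1-l))) + ν (Set.Icc 0 (l/(1-l)))ᶜ :=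
              measure_union_le _ _
          _ = 0 := by rw [hempty, hsupp, measure_empty, add_zero]
      rw [h0, mul_zero]
  calc ∑ w : Fin m → Bool, (2⁻¹:ENNReal)^m * ν (Sword l (List.ofFn w) ⁻¹' B)
      ≤ ∑ w : Fin m → Bool, (if w ∈ S then (2⁻¹:ENNReal)^m else 0) :=
        Finset.sum_le_sum (fun w _ => hterm w)
    _ = ∑ w ∈ Finset.univ.filter (· ∈ S), (2⁻¹:ENNReal)^m := (Finset.sum_filter _ _).symm
    _ = (Finset.univ.filter (· ∈ S)).card * (2⁻¹:ENNReal)^m := by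
        rw [Finset.sum_const, nsmul_eq_mul]
    _ ≤ (N : ENNReal) * (2⁻¹:ENNReal)^m := by
        apply mul_le_mul_left
        have hcard : (Finset.univ.filter (· ∈ S)).card = S.ncard := by
          rw [← Set.ncard_coe_finset]
          congr 1
          ext w
          simp
        rw [hcard]
        exact_mod_cast hcn

lemma exists_n (l η r : ℝ) (k : ℕ) (hk : 1 ≤ k) (hl0 : 0 < l) (hl1 : l < 1)
    (hη : 0 < η) (hr : 0 < r) (hrη : r ≤ η) :
    ∃ n : ℕ, 1 ≤ n ∧ l^(n*k)*η ≤ r ∧ r ≤ l^((n-1)*k)*η := by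
  have hex : ∃ j : ℕ, l^(j*k)*η ≤ r := by
    obtain ⟨j, hj⟩ := exists_pow_lt_of_lt_one (div_pos hr hη) hl1
    refine ⟨j, ?_⟩
    have h1 : l^(j*k) ≤ l^j :=
      pow_le_pow_of_le_one hl0.le hl1.le (Nat.le_mul_of_pos_right j hk)
    have := (lt_div_iff₀ hη).1 (lt_of_le_of_lt h1 hj)
    linarith
  classical
  set n0 := Nat.find hex with hn0
  have hP : l^(n0*k)*η ≤ r := Nat.find_spec hex
  match hm : n0 with
  | 0 =>
    refine ⟨1, le_refl 1, ?_, ?_⟩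
    · have h1 : l^(1*k) ≤ 1 := pow_le_one₀ hl0.le hl1.le
      simp only [Nat.zero_mul, pow_zero, one_mul] at hP
      nlinarith
    · simpa using hrη
  | m+1 =>
    refine ⟨m+1, Nat.le_add_left 1 m, hP, ?_⟩
    have hmin : ¬ (l^(m*k)*η ≤ r) :=
      Nat.find_min hex (by omega : m < Nat.find hex)
    simpa using (not_le.1 hmin).le

lemma pow_eq_exp (l : ℝ) (hl : 0 < l) (m : ℕ) :
    (l:ℝ)^m = Real.exp (Real.log l * m) := by
  rw [← Real.rpow_natCast l m, Real.rpow_def_of_pos hl]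

lemma key_identity (l : ℝ) (k n : ℕ) (hk : 2 ≤ k) (hl0 : 0 < l) (hl1 : l < 1) :
    (2:ℝ)^n * (2⁻¹:ℝ)^(k*n) =
      ((l:ℝ)^(n*k)) ^ (((k:ℝ)-1)*Real.log 2/((k:ℝ)*|Real.log l|)) := by
  have hlogl : Real.log l < 0 := Real.log_neg hl0 hl1
  have habs : |Real.log l| = -Real.log l := abs_of_neg hlogl
  have hbpos : (0:ℝ) < l^(n*k) := pow_pos hl0 _
  rw [Real.rpow_def_of_pos hbpos, Real.log_pow]
  rw [pow_eq_exp 2 (by norm_num), pow_eq_exp 2⁻¹ (by norm_num), ← Real.exp_add, Real.log_inv]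
  congr 1
  rw [habs]
  have hk0 : (k:ℝ) ≠ 0 := by positivity
  have hll : Real.log l ≠ 0 := ne_of_lt hlogl
  push_cast
  field_simp
  ring

lemma ofReal_half2 : ENNReal.ofReal (2⁻¹:ℝ) = 2⁻¹ := by
  rw [show (2⁻¹:ℝ) = 1/2 by norm_num]; exact ofReal_half

lemma key_identity2 (l : ℝ) (m : ℕ) (hl0 : 0 < l) (hl1 : l < 1) :
    ((l:ℝ)^m) ^ (Real.log 2/|Real.log l|) = (2⁻¹:ℝ)^m := by
  have hlogl : Real.log l < 0 := Real.log_neg hl0 hl1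
  have habs : |Real.log l| = -Real.log l := abs_of_neg hlogl
  have hbpos : (0:ℝ) < l^m := pow_pos hl0 _
  rw [Real.rpow_def_of_pos hbpos, Real.log_pow, pow_eq_exp 2⁻¹ (by norm_num), Real.log_inv]
  congr 1
  rw [habs]
  have hll : -Real.log l ≠ 0 := by
    simpa using ne_of_lt hlogl
  field_simp
  rw [mul_div_assoc, div_self (ne_of_lt hlogl), mul_one]

lemma nu_ball_ge (l : ℝ) (ν : Measure ℝ) [IsProbabilityMeasure ν]
    (hl0 : 1/2 < l) (hl1 : l < 1)
    (hss : ν = ENNReal.ofReal (1 / 2) • ν.map (Smap l false) +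
      ENNReal.ofReal (1 / 2) • ν.map (Smap l true))
    (hsupp : ν (Set.Icc 0 (l / (1 - l)))ᶜ = 0)
    (x r : ℝ) (hx : x ∈ Set.Icc 0 (l/(1-l))) (m : ℕ)
    (hm' : l ^ m * (l/(1-l)) < r) :
    (2⁻¹:ENNReal)^m ≤ ν (Metric.ball x r) := by
  have hlpos : (0:ℝ) < l := by linarith
  have h1 : (0:ℝ) < 1 - l := by linarith
  obtain ⟨w, y, hy, hyx⟩ := Set.mem_iUnion.1 (cover l hl0 hl1 m hx)
  have hsub : Sword l (List.ofFn w) '' Set.Icc 0 (l/(1-l)) ⊆ Metric.ball x r := by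
    rintro _ ⟨u, hu, rfl⟩
    rw [Metric.mem_ball, Real.dist_eq, ← hyx, sword_sub, List.length_ofFn]
    rw [abs_mul, abs_of_pos (pow_pos hlpos m)]
    obtain ⟨hu1, hu2⟩ := hu
    obtain ⟨hy1, hy2⟩ := hy
    have : |u - y| ≤ l/(1-l) := by
      rw [abs_sub_le_iff]
      constructor <;> linarith
    calc l ^ m * |u - y| ≤ l ^ m * (l/(1-l)) :=
          mul_le_mul_of_nonneg_left this (le_of_lt (pow_pos hlpos m))
      _ < r := hm'
  calc (2⁻¹:ENNReal)^m
      ≤ ν (Sword l (List.ofFn w) '' Set.Icc 0 (l/(1-l))) := nu_cyl l ν hlpos hss hsupp m w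
    _ ≤ ν (Metric.ball x r) := measure_mono hsub

lemma nu_ball_lower (l : ℝ) (ν : Measure ℝ) [IsProbabilityMeasure ν]
    (hl0 : 1/2 < l) (hl1 : l < 1)
    (hss : ν = ENNReal.ofReal (1 / 2) • ν.map (Smap l false) +
      ENNReal.ofReal (1 / 2) • ν.map (Smap l true))
    (hsupp : ν (Set.Icc 0 (l / (1 - l)))ᶜ = 0)
    (x r : ℝ) (hx : x ∈ Set.Icc 0 (l/(1-l))) (hr : 0 < r) (hrL : r ≤ l/(1-l)) :
    ENNReal.ofReal ((1-l) ^ (Real.log 2/|Real.log l|) * r ^ (Real.log 2/|Real.log l|)) ≤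
      ν (Metric.ball x r) := by
  have hlpos : (0:ℝ) < l := by linarith
  have h1 : (0:ℝ) < 1 - l := by linarith
  have hLpos : (0:ℝ) < l/(1-l) := div_pos hlpos h1
  set e := Real.log 2/|Real.log l| with he
  have he0 : 0 ≤ e := by
    apply div_nonneg (Real.log_nonneg (by norm_num))
    positivity
  have hex : ∃ m : ℕ, l^m * (l/(1-l)) < r := by
    obtain ⟨m, hm⟩ := exists_pow_lt_of_lt_one (div_pos hr hLpos) hl1
    exact ⟨m, by rwa [← lt_div_iff₀ hLpos]⟩
  classical
  set m := Nat.find hex with hmdef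
  have hm : l^m * (l/(1-l)) < r := Nat.find_spec hex
  have hm1 : 1 ≤ m := by
    by_contra h
    have : m = 0 := by omega
    rw [this] at hm
    simp at hm
    linarith
  have hmin : r ≤ l^(m-1) * (l/(1-l)) :=
    le_of_not_gt (Nat.find_min hex (by omega : m - 1 < m))
  calc ENNReal.ofReal ((1-l) ^ e * r ^ e)
      ≤ ENNReal.ofReal ((1-l) ^ e * (l^(m-1) * (l/(1-l))) ^ e) := by
        apply ENNReal.ofReal_le_ofReal
        apply mul_le_mul_of_nonneg_left _ (Real.rpow_nonneg h1.le e)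
        exact Real.rpow_le_rpow hr.le hmin he0
    _ = ENNReal.ofReal ((2⁻¹:ℝ)^m) := by
        congr 1
        rw [← Real.mul_rpow h1.le (by positivity)]
        rw [show (1-l) * (l^(m-1) * (l/(1-l))) = l^(m-1) * l by field_simp]
        rw [show l^(m-1) * l = l^m by rw [← pow_succ]; congr 1; omega]
        exact key_identity2 l m hlpos hl1
    _ = (2⁻¹:ENNReal)^m := by rw [ENNReal.ofReal_pow (by norm_num), ofReal_half2]
    _ ≤ ν (Metric.ball x r) := nu_ball_ge l ν hl0 hl1 hss hsupp x r hx m hm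

lemma main_upper (l : ℝ) (k : ℕ) (hk : 2 ≤ k) (hl0 : 1/2 < l) (hl1 : l < 1)
    (η : ℝ) (hη : 0 < η)
    (hcount : ∀ n : ℕ, 1 ≤ n → ∀ x ∈ Set.Icc (0 : ℝ) (l / (1 - l)),
      {w : Fin (k * n) → Bool |
        ((Sword l (List.ofFn w) '' Set.Icc 0 (l / (1 - l))) ∩
          Metric.ball x (l ^ ((n - 1) * k) * η)).Nonempty}.ncard ≤ 2 ^ n)
    (ν : Measure ℝ) [IsProbabilityMeasure ν]
    (hss : ν = ENNReal.ofReal (1 / 2) • ν.map (Smap l false) +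
      ENNReal.ofReal (1 / 2) • ν.map (Smap l true))
    (hsupp : ν (Set.Icc 0 (l / (1 - l)))ᶜ = 0)
    (x r : ℝ) (hx : x ∈ Set.Icc 0 (l/(1-l))) (hr : 0 < r) (hrη : r ≤ η) :
    ν (Metric.ball x r) ≤ ENNReal.ofReal
      (η ^ (-(((k:ℝ)-1)*Real.log 2/((k:ℝ)*|Real.log l|))) *
        r ^ (((k:ℝ)-1)*Real.log 2/((k:ℝ)*|Real.log l|))) := by
  set d := ((k:ℝ)-1)*Real.log 2/((k:ℝ)*|Real.log l|) with hd
  have hlpos : (0:ℝ) < l := by linarith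
  have hd0 : 0 ≤ d := by
    rw [hd]
    apply div_nonneg
    · apply mul_nonneg _ (Real.log_nonneg (by norm_num))
      have : (2:ℝ) ≤ (k:ℝ) := by exact_mod_cast hk
      linarith
    · positivity
  obtain ⟨n, hn1, hnl, hnr⟩ := exists_n l η r k (by omega) hlpos hl1 hη hr hrη
  have hest : ν (Metric.ball x r) ≤ ((2^n : ℕ) : ENNReal) * (2⁻¹:ENNReal)^(k*n) := by
    refine le_trans (measure_mono (Metric.ball_subset_ball hnr)) ?_
    exact nu_ball_est l ν hss hsupp (k*n) _ Metric.isOpen_ball.measurableSet (2^n)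
      (hcount n hn1 x hx)
  refine le_trans hest ?_
  have heq : ((2^n : ℕ) : ENNReal) * (2⁻¹:ENNReal)^(k*n) =
      ENNReal.ofReal ((2:ℝ)^n * (2⁻¹:ℝ)^(k*n)) := by
    rw [ENNReal.ofReal_mul (by positivity), ENNReal.ofReal_pow (by norm_num),
      ENNReal.ofReal_pow (by norm_num), ofReal_half2]
    norm_num
  rw [heq]
  apply ENNReal.ofReal_le_ofReal
  rw [key_identity l k n hk hlpos hl1, ← hd]
  have h1 : ((l^(n*k)*η : ℝ)) ^ d ≤ r ^ d := Real.rpow_le_rpow (by positivity) hnl hd0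
  rw [Real.mul_rpow (by positivity) hη.le] at h1
  have hηd : (0:ℝ) < η ^ d := Real.rpow_pos_of_pos hη d
  rw [Real.rpow_neg hη.le]
  calc ((l:ℝ)^(n*k)) ^ d = (η ^ d)⁻¹ * (((l:ℝ)^(n*k)) ^ d * η ^ d) := by
        field_simp
    _ ≤ (η ^ d)⁻¹ * r ^ d := by
        apply mul_le_mul_of_nonneg_left h1 (by positivity)

theorem stmt15 (l : ℝ) (k : ℕ) (hk : 2 ≤ k) (hl0 : 1 / 2 < l) (hl1 : l < 1)
    (hΛ : 2 * l - 1 < l ^ (k - 1) * (1 - l))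
    (η : ℝ) (hη : 0 < η)
    (hcount : ∀ n : ℕ, 1 ≤ n → ∀ x ∈ Set.Icc (0 : ℝ) (l / (1 - l)),
      {w : Fin (k * n) → Bool |
        ((Sword l (List.ofFn w) '' Set.Icc 0 (l / (1 - l))) ∩
          Metric.ball x (l ^ ((n - 1) * k) * η)).Nonempty}.ncard ≤ 2 ^ n)
    (ν : Measure ℝ) [IsProbabilityMeasure ν]
    (hss : ν = ENNReal.ofReal (1 / 2) • ν.map (Smap l false) +
      ENNReal.ofReal (1 / 2) • ν.map (Smap l true))
    (hsupp : ν (Set.Icc 0 (l / (1 - l)))ᶜ = 0) :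
    (∀ x ∈ Set.Icc (0 : ℝ) (l / (1 - l)),
      (k - 1 : ℝ) * Real.log 2 / (k * |Real.log l|) ≤
        Filter.liminf (fun r : ℝ => Real.log (ν (Metric.ball x r)).toReal / Real.log r)
          (nhdsWithin 0 (Set.Ioi 0))) ∧
    ∃ C δ : ℝ, 0 < C ∧ 0 < δ ∧ ∀ a b : ℝ, a ≤ b →
      Set.Icc a b ⊆ Set.Icc (0 : ℝ) (l / (1 - l)) →
        ν (Set.Icc a b) ≤ ENNReal.ofReal (C * (b - a) ^ δ) := by
  have hlpos : (0:ℝ) < l := by linarith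
  have h1l : (0:ℝ) < 1 - l := by linarith
  have hLpos : (0:ℝ) < l/(1-l) := div_pos hlpos h1l
  have hlogl : Real.log l < 0 := Real.log_neg hlpos hl1
  set d := ((k:ℝ) - 1) * Real.log 2 / ((k:ℝ) * |Real.log l|) with hd
  have hk2 : (2:ℝ) ≤ (k:ℝ) := by exact_mod_cast hk
  have habs : 0 < |Real.log l| := abs_pos.2 (ne_of_lt hlogl)
  have hd0 : 0 < d := by
    apply div_pos
    · exact mul_pos (by linarith) (Real.log_pos (by norm_num))
    · exact mul_pos (by linarith) habs
  set Cu := η ^ (-d) with hCu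
  have hCu0 : 0 < Cu := Real.rpow_pos_of_pos hη _
  have hup : ∀ x ∈ Set.Icc (0:ℝ) (l/(1-l)), ∀ r : ℝ, 0 < r → r ≤ η →
      ν (Metric.ball x r) ≤ ENNReal.ofReal (Cu * r ^ d) :=
    fun x hx r hr hrη => main_upper l k hk hl0 hl1 η hη hcount ν hss hsupp x r hx hr hrη
  constructor
  · -- liminf part
    intro x hx
    set e := Real.log 2 / |Real.log l| with he
    set cl := (1-l) ^ e with hcl
    have hcl0 : 0 < cl := Real.rpow_pos_of_pos h1l _
    set ρ := min (min η (l/(1-l))) (Real.exp (-(|Real.log cl| + 1))) with hρ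
    have hρ0 : 0 < ρ := lt_min (lt_min hη hLpos) (Real.exp_pos _)
    set f := fun r : ℝ => Real.log (ν (Metric.ball x r)).toReal / Real.log r with hf
    have hmem : ∀ᶠ r in nhdsWithin 0 (Set.Ioi 0), r ∈ Set.Ioo (0:ℝ) ρ :=
      Ioo_mem_nhdsGT_of_mem ⟨le_refl 0, hρ0⟩
    have hfact : ∀ r ∈ Set.Ioo (0:ℝ) ρ,
        d + Real.log Cu / Real.log r ≤ f r ∧ f r ≤ e + |Real.log cl| := by
      intro r hr
      obtain ⟨hr0, hrρ⟩ := hr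
      have hrη : r ≤ η :=
        le_of_lt (lt_of_lt_of_le hrρ (le_trans (min_le_left _ _) (min_le_left _ _)))
      have hrL : r ≤ l/(1-l) :=
        le_of_lt (lt_of_lt_of_le hrρ (le_trans (min_le_left _ _) (min_le_right _ _)))
      have hrexp : r < Real.exp (-(|Real.log cl| + 1)) := lt_of_lt_of_le hrρ (min_le_right _ _)
      have hlogr : Real.log r < -(|Real.log cl| + 1) := by
        calc Real.log r < Real.log (Real.exp (-(|Real.log cl|+1))) := Real.log_lt_log hr0 hrexp
          _ = -(|Real.log cl|+1) := Real.log_exp _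
      have hlogrneg : Real.log r < 0 := by
        have := abs_nonneg (Real.log cl); linarith
      have hlogrne : Real.log r ≠ 0 := ne_of_lt hlogrneg
      have hν0 : 0 < ν (Metric.ball x r) := nu_ball_pos l ν hl0 hl1 hss hsupp x r hx hr0
      have hνtop : ν (Metric.ball x r) ≠ ⊤ := measure_ne_top ν _
      set t := (ν (Metric.ball x r)).toReal with ht
      have ht0 : 0 < t := ENNReal.toReal_pos (ne_of_gt hν0) hνtop
      have htu : t ≤ Cu * r ^ d :=
        ENNReal.toReal_le_of_le_ofReal (by positivity) (hup x hx r hr0 hrη)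
      have htl : cl * r ^ e ≤ t :=
        (ENNReal.ofReal_le_iff_le_toReal hνtop).1
          (nu_ball_lower l ν hl0 hl1 hss hsupp x r hx hr0 hrL)
      have hfr : f r = Real.log t / Real.log r := rfl
      constructor
      · have hlog : Real.log t ≤ Real.log Cu + d * Real.log r := by
          calc Real.log t ≤ Real.log (Cu * r ^ d) := Real.log_le_log ht0 htu
            _ = Real.log Cu + Real.log (r ^ d) :=
                Real.log_mul (ne_of_gt hCu0) (ne_of_gt (Real.rpow_pos_of_pos hr0 d))
            _ = Real.log Cu + d * Real.log r := by rw [Real.log_rpow hr0]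
        have hdiv : (Real.log Cu + d * Real.log r) / Real.log r ≤ Real.log t / Real.log r :=
          div_le_div_of_nonpos_of_le (le_of_lt hlogrneg) hlog
        rw [hfr]
        calc d + Real.log Cu / Real.log r
            = (Real.log Cu + d * Real.log r) / Real.log r := by
              rw [add_div, mul_div_cancel_right₀ _ hlogrne, add_comm]
          _ ≤ Real.log t / Real.log r := hdiv
      · have hlog : Real.log cl + e * Real.log r ≤ Real.log t := by
          calc Real.log cl + e * Real.log r
              = Real.log (cl * r ^ e) := by
                rw [Real.log_mul (ne_of_gt hcl0) (ne_of_gt (Real.rpow_pos_of_pos hr0 e)),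
                  Real.log_rpow hr0]
            _ ≤ Real.log t := Real.log_le_log (by positivity) htl
        have hdiv : Real.log t / Real.log r ≤ (Real.log cl + e * Real.log r) / Real.log r :=
          div_le_div_of_nonpos_of_le (le_of_lt hlogrneg) hlog
        rw [hfr]
        calc Real.log t / Real.log r
            ≤ (Real.log cl + e * Real.log r) / Real.log r := hdiv
          _ = e + Real.log cl / Real.log r := by
              rw [add_div, mul_div_cancel_right₀ _ hlogrne, add_comm]
          _ ≤ e + |Real.log cl| := by
              have h1 : Real.log cl / Real.log r ≤ |Real.log cl / Real.log r| := le_abs_self _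
              have h2 : |Real.log cl / Real.log r| = |Real.log cl| / |Real.log r| := abs_div _ _
              have h3 : (1:ℝ) ≤ |Real.log r| := by
                rw [abs_of_neg hlogrneg]
                have := abs_nonneg (Real.log cl); linarith
              have h4 : |Real.log cl| / |Real.log r| ≤ |Real.log cl| :=
                div_le_self (abs_nonneg _) h3
              linarith
    have hcb : Filter.IsCoboundedUnder (· ≥ ·) (nhdsWithin 0 (Set.Ioi 0)) f := by
      apply Filter.IsBoundedUnder.isCoboundedUnder_ge
      refine ⟨e + |Real.log cl|, ?_⟩
      rw [Filter.eventually_map]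
      filter_upwards [hmem] with r hr
      exact (hfact r hr).2
    have htend : Filter.Tendsto (fun r => Real.log Cu / Real.log r)
        (nhdsWithin 0 (Set.Ioi 0)) (nhds 0) := by
      have h1 : Filter.Tendsto Real.log (nhdsWithin 0 (Set.Ioi 0)) Filter.atBot :=
        Real.tendsto_log_nhdsGT_zero
      have h1' : Filter.Tendsto (fun r:ℝ => -Real.log r) (nhdsWithin 0 (Set.Ioi 0))
          Filter.atTop := Filter.tendsto_neg_atBot_atTop.comp h1
      have h2' : Filter.Tendsto (fun r:ℝ => (-Real.log r)⁻¹) (nhdsWithin 0 (Set.Ioi 0))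
          (nhds 0) := tendsto_inv_atTop_zero.comp h1'
      have h2 : Filter.Tendsto (fun r:ℝ => (Real.log r)⁻¹) (nhdsWithin 0 (Set.Ioi 0))
          (nhds 0) := by
        have h := h2'.neg
        rw [neg_zero] at h
        refine h.congr fun r => ?_
        rw [inv_neg, neg_neg]
      have h3 := h2.const_mul (Real.log Cu)
      rw [mul_zero] at h3
      simpa [div_eq_mul_inv] using h3
    apply le_of_forall_sub_le
    intro ε hε
    apply Filter.le_liminf_of_le hcb
    have hev2 : ∀ᶠ r in nhdsWithin 0 (Set.Ioi 0), -ε < Real.log Cu / Real.log r :=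
      htend.eventually (eventually_gt_nhds (by linarith : -ε < (0:ℝ)))
    filter_upwards [hmem, hev2] with r h1 h2
    have := (hfact r h1).1
    linarith
  · refine ⟨Cu, d, hCu0, hd0, ?_⟩
    intro a b hab hsub
    rcases eq_or_lt_of_le hab with rfl | hlt
    · rw [Set.Icc_self]
      have ha : a ∈ Set.Icc (0:ℝ) (l/(1-l)) := hsub (Set.mem_Icc.2 ⟨le_refl a, le_refl a⟩)
      have hsing : ν {a} = 0 := by
        refine le_antisymm ?_ zero_le
        have htends : Filter.Tendsto (fun s => ENNReal.ofReal (Cu * s ^ d))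
            (nhdsWithin 0 (Set.Ioi 0)) (nhds 0) := by
          have h1 : Filter.Tendsto (fun s:ℝ => s ^ d) (nhdsWithin 0 (Set.Ioi 0)) (nhds 0) := by
            have hc : ContinuousAt (fun s:ℝ => s ^ d) 0 :=
              Real.continuousAt_rpow_const 0 d (Or.inr hd0.le)
            have h := hc.tendsto.mono_left (nhdsWithin_le_nhds (s := Set.Ioi (0:ℝ)))
            simpa [Real.zero_rpow (ne_of_gt hd0)] using h
          have h2 := h1.const_mul Cu
          rw [mul_zero] at h2
          have h3 := ENNReal.tendsto_ofReal h2
          simpa using h3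
        refine ge_of_tendsto htends ?_
        filter_upwards [Ioc_mem_nhdsGT_of_mem ⟨le_refl (0:ℝ), hη⟩] with s hs
        calc ν {a} ≤ ν (Metric.ball a s) :=
              measure_mono (Set.singleton_subset_iff.2 (Metric.mem_ball_self hs.1))
          _ ≤ ENNReal.ofReal (Cu * s ^ d) := hup a ha s hs.1 hs.2
      rw [hsing]
      exact zero_le
    · have hs0 : (0:ℝ) < b - a := by linarith
      have hx : (a+b)/2 ∈ Set.Icc (0:ℝ) (l/(1-l)) := hsub ⟨by linarith, by linarith⟩
      have hsubball : Set.Icc a b ⊆ Metric.ball ((a+b)/2) (b-a) := by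
        intro y hy
        obtain ⟨hy1, hy2⟩ := hy
        rw [Metric.mem_ball, Real.dist_eq, abs_lt]
        constructor <;> [linarith; linarith]
      rcases le_or_gt (b-a) η with hcase | hcase
      · calc ν (Set.Icc a b) ≤ ν (Metric.ball ((a+b)/2) (b-a)) := measure_mono hsubball
          _ ≤ ENNReal.ofReal (Cu * (b-a) ^ d) := hup _ hx (b-a) hs0 hcase
      · calc ν (Set.Icc a b) ≤ 1 := prob_le_one
          _ ≤ ENNReal.ofReal (Cu * (b-a) ^ d) := by
              rw [← ENNReal.ofReal_one]
              apply ENNReal.ofReal_le_ofReal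
              have hmono : η ^ d ≤ (b-a) ^ d := Real.rpow_le_rpow hη.le hcase.le hd0.le
              calc (1:ℝ) = Cu * η ^ d := by
                    rw [hCu, Real.rpow_neg hη.le,
                      inv_mul_cancel₀ (ne_of_gt (Real.rpow_pos_of_pos hη d))]
                _ ≤ Cu * (b-a) ^ d := mul_le_mul_of_nonneg_left hmono hCu0.le
end
end
end
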